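/- For unit-norm φ, ψ ∈ A(D) with c(φ,ψ) = Re ∫_D (\bar{φ}/|φ|)ψ dxdy, one has c(φ,ψ) = 1 if and only if ψ = φ almost everywhere. Hence the angle between two distinct Teichmüller geodesic directions is strictly positive. -/

import Mathlib

open MeasureTheory Complex

noncomputable section

/-- The open unit disk in ℂ. -/
def 𝔻 : Set ℂ := Metric.ball 0 1

/-- Planar Lebesgue measure restricted to the unit disk. -/
def vD : MeasureTheory.Measure ℂ := MeasureTheory.volume.restrict 𝔻

/-- `A(D)`: holomorphic on the disk and integrable there. -/
def AD (φ : ℂ → ℂ) : Prop := DifferentiableOn ℂ φ 𝔻 ∧ MeasureTheory.Integrable φ vD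

/-- L¹ norm over the disk. -/
def nrm (φ : ℂ → ℂ) : ℝ := ∫ z, ‖φ z‖ ∂vD

/-- Pairing Re ∫_D μ φ. -/
def pair (μ φ : ℂ → ℂ) : ℝ := (∫ z, μ z * φ z ∂vD).re

/-- Infinitesimal Teichmüller norm. -/
def lam (μ : ℂ → ℂ) : ℝ := sSup {r : ℝ | ∃ φ, AD φ ∧ nrm φ = 1 ∧ r = pair μ φ}

/-- Unit Teichmüller differential `conj φ / |φ|`. -/
def tmu (φ : ℂ → ℂ) (z : ℂ) : ℂ := (starRingEnd ℂ) (φ z) / ((‖φ z‖ : ℝ) : ℂ)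

/-- Cosine of the angle between geodesic directions. -/
def ang (φ ψ : ℂ → ℂ) : ℝ := (∫ z, tmu φ z * ψ z ∂vD).re

end

lemma key1 (w : ℂ) (r : ℝ) (h1 : w.re = r) (h2 : ‖w‖ ≤ r) : w = (r:ℂ) := by
  have h3 : ‖w‖ = r := le_antisymm h2 (h1 ▸ Complex.re_le_norm w)
  have him : w.im = 0 := by
    have := Complex.sq_norm w
    rw [h3, Complex.normSq_apply, h1] at this
    nlinarith
  exact Complex.ext (by simp [h1]) (by simp [him])

lemma ratio (a b : ℂ) (ha : a ≠ 0)
    (hE : (starRingEnd ℂ) a * b = ((‖a‖ * ‖b‖ : ℝ):ℂ)) :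
    b / a = ((‖b‖ / ‖a‖ : ℝ):ℂ) := by
  have h1 : (starRingEnd ℂ) a ≠ 0 := by simpa using ha
  have h2 : b / a = ((starRingEnd ℂ) a * b) / ((starRingEnd ℂ) a * a) :=
    (mul_div_mul_left b a h1).symm
  have h4 : ((‖a‖ : ℝ) : ℂ) ≠ 0 := by
    simp only [ne_eq, Complex.ofReal_eq_zero, norm_eq_zero]; exact ha
  rw [h2, hE, mul_comm ((starRingEnd ℂ) a) a, Complex.mul_conj, Complex.normSq_eq_norm_sq]
  push_cast
  field_simp

lemma tmu_abs_le (φ : ℂ → ℂ) (z : ℂ) : ‖tmu φ z‖ ≤ 1 := by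
  by_cases h : φ z = 0
  · simp [tmu, h]
  · have : ‖tmu φ z‖ = 1 := by
      rw [tmu, norm_div, Complex.norm_conj, Complex.norm_real, Real.norm_eq_abs,
        _root_.abs_of_nonneg (norm_nonneg _), div_self]
      simpa using h
    exact this.le

/-- c(φ,ψ) = 1 iff ψ = φ a.e. -/
theorem stmt6 (φ ψ : ℂ → ℂ) (hφ : AD φ) (hψ : AD ψ)
    (hnφ : nrm φ = 1) (hnψ : nrm ψ = 1) :
    ang φ ψ = 1 ↔ (∀ᵐ z ∂vD, ψ z = φ z) := by
  have hDopen : IsOpen 𝔻 := Metric.isOpen_ball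
  have hDmeas : MeasurableSet 𝔻 := hDopen.measurableSet
  have hgm : AEStronglyMeasurable (fun z => tmu φ z * ψ z) vD := by
    have hk : Measurable (fun w : ℂ => (starRingEnd ℂ) w / ((‖w‖ : ℝ) : ℂ)) :=
      (Complex.continuous_conj.measurable).div
        (Complex.continuous_ofReal.comp continuous_norm).measurable
    exact ((hk.comp_aemeasurable hφ.2.aemeasurable).aestronglyMeasurable).mul
      hψ.2.aestronglyMeasurable
  have habs : ∀ z, ‖tmu φ z * ψ z‖ ≤ ‖ψ z‖ := by
    intro z
    rw [norm_mul]
    calc ‖tmu φ z‖ * ‖ψ z‖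
        ≤ 1 * ‖ψ z‖ := by
          exact mul_le_mul_of_nonneg_right (tmu_abs_le φ z) (norm_nonneg _)
      _ = ‖ψ z‖ := one_mul _
  have hgint : Integrable (fun z => tmu φ z * ψ z) vD :=
    hψ.2.mono hgm (ae_of_all _ fun z => by
      exact habs z)
  have hψabs : Integrable (fun z => ‖ψ z‖) vD := by
    exact hψ.2.norm
  have hφabs : Integrable (fun z => ‖φ z‖) vD := by
    exact hφ.2.norm
  constructor
  · -- forward direction
    intro h1
    -- (tmu φ · ψ).re integrable
    have hreint : Integrable (fun z => (tmu φ z * ψ z).re) vD := by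
      simpa using hgint.re
    have hre : ang φ ψ = ∫ z, (tmu φ z * ψ z).re ∂vD := by
      have := integral_re (μ := vD) hgint
      unfold ang
      simpa using this.symm
    have hint0 : ∫ z, (‖ψ z‖ - (tmu φ z * ψ z).re) ∂vD = 0 := by
      rw [integral_sub hψabs hreint, ← hre]
      have : ∫ z, ‖ψ z‖ ∂vD = nrm ψ := rfl
      rw [this, hnψ, h1, sub_self]
    have hle : ∀ z, (tmu φ z * ψ z).re ≤ ‖ψ z‖ := fun z =>
      le_trans (Complex.re_le_norm _) (habs z)
    have h0 : (fun z => ‖ψ z‖ - (tmu φ z * ψ z).re) =ᵐ[vD] 0 :=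
      (integral_eq_zero_iff_of_nonneg_ae
        (ae_of_all _ fun z => sub_nonneg.2 (hle z)) (hψabs.sub hreint)).1 hint0
    have hkey : ∀ᵐ z ∂vD, tmu φ z * ψ z = ((‖ψ z‖ : ℝ) : ℂ) := by
      filter_upwards [h0] with z hz
      have hz' : (tmu φ z * ψ z).re = ‖ψ z‖ := by
        have : ‖ψ z‖ - (tmu φ z * ψ z).re = 0 := hz
        linarith
      exact key1 _ _ hz' (habs z)
    -- a.e. condition E
    have hE : ∀ᵐ z ∂vD,
        (starRingEnd ℂ) (φ z) * ψ z = ((‖φ z‖ * ‖ψ z‖ : ℝ) : ℂ) := by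
      filter_upwards [hkey] with z hz
      by_cases h0' : φ z = 0
      · have hz2 : (0:ℂ) = ((‖ψ z‖ : ℝ) : ℂ) := by
          simpa [tmu, h0'] using hz
        have : ‖ψ z‖ = 0 := by exact_mod_cast hz2.symm
        have hψ0 : ψ z = 0 := by simpa using this
        simp [h0', hψ0]
      · have ha : ((‖φ z‖ : ℝ) : ℂ) ≠ 0 := by
          simp only [ne_eq, Complex.ofReal_eq_zero, norm_eq_zero]; exact h0'
        rw [tmu, div_mul_eq_mul_div, div_eq_iff ha] at hz
        rw [hz]; push_cast; ring
    -- the set where φ ≠ 0 in the disk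
    set U : Set ℂ := {z ∈ 𝔻 | φ z ≠ 0} with hU_def
    have hUopen : IsOpen U := by
      have : U = 𝔻 ∩ φ ⁻¹' ({0}ᶜ) := rfl
      rw [this]
      exact hφ.1.continuousOn.isOpen_inter_preimage hDopen isOpen_compl_singleton
    have hUsub : U ⊆ 𝔻 := fun z hz => hz.1
    -- N: exceptional null set of hE
    have hN : vD {z | ¬ ((starRingEnd ℂ) (φ z) * ψ z
        = ((‖φ z‖ * ‖ψ z‖ : ℝ) : ℂ))} = 0 := by
      rw [← ae_iff] at *
      exact hE
    -- positive measure of open subsets of 𝔻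
    have hpos : ∀ O : Set ℂ, IsOpen O → O ⊆ 𝔻 → O.Nonempty →
        ∃ z₁ ∈ O, (starRingEnd ℂ) (φ z₁) * ψ z₁
          = ((‖φ z₁‖ * ‖ψ z₁‖ : ℝ) : ℂ) := by
      intro O hO hO𝔻 hOne
      by_contra hcon
      push_neg at hcon
      have hsub : O ⊆ {z | ¬ ((starRingEnd ℂ) (φ z) * ψ z
          = ((‖φ z‖ * ‖ψ z‖ : ℝ) : ℂ))} := fun z hz => hcon z hz
      have h2 : vD O = 0 := le_antisymm (hN ▸ measure_mono hsub) zero_le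
      have h3 : vD O = volume O := by
        rw [vD, Measure.restrict_apply hO.measurableSet,
          Set.inter_eq_self_of_subset_left hO𝔻]
      exact absurd (h3 ▸ h2) (ne_of_gt (hO.measure_pos volume hOne))
    -- Im(ψ/φ) = 0 on U
    have hIm : ∀ z ∈ U, (ψ z / φ z).im = 0 := by
      intro z hz
      by_contra hzim
      set A : Set ℂ := {w ∈ U | (ψ w / φ w).im ≠ 0} with hA_def
      have hAopen : IsOpen A := by
        have hcont : ContinuousOn (fun w => (ψ w / φ w).im) U :=
          Complex.continuous_im.comp_continuousOn
            (((hψ.1.continuousOn.mono hUsub)).div ((hφ.1.continuousOn.mono hUsub))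
              (fun w hw => hw.2))
        have : A = U ∩ (fun w => (ψ w / φ w).im) ⁻¹' ({0}ᶜ) := rfl
        rw [this]
        exact hcont.isOpen_inter_preimage hUopen isOpen_compl_singleton
      obtain ⟨z₁, hz₁A, hz₁E⟩ := hpos A hAopen (fun w hw => hw.1.1) ⟨z, hz, hzim⟩
      have : (ψ z₁ / φ z₁).im = 0 := by
        rw [ratio _ _ hz₁A.1.2 hz₁E]
        simp
      exact hz₁A.2 this
    -- existence of a point of U
    have hUne : U.Nonempty := by
      by_contra hcon
      have hzero : ∀ z ∈ 𝔻, φ z = 0 := by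
        intro z hz
        by_contra h
        exact hcon ⟨z, hz, h⟩
      have h0' : (fun z => ‖φ z‖) =ᵐ[vD] (fun _ => (0:ℝ)) := by
        filter_upwards [ae_restrict_mem hDmeas] with z hz
        simp [hzero z hz]
      have : nrm φ = 0 := by
        unfold nrm
        rw [integral_congr_ae h0', integral_zero]
      rw [hnφ] at this; norm_num at this
    obtain ⟨z₀, hz₀⟩ := hUne
    have hφan : AnalyticOnNhd ℂ φ 𝔻 := hφ.1.analyticOnNhd hDopen
    have hψan : AnalyticOnNhd ℂ ψ 𝔻 := hψ.1.analyticOnNhd hDopen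
    have hhan : AnalyticAt ℂ (fun z => ψ z / φ z) z₀ :=
      (hψan z₀ hz₀.1).div (hφan z₀ hz₀.1) hz₀.2
    rcases hhan.eventually_constant_or_nhds_le_map_nhds with hconst | hopen
    · -- constant case
      set c : ℂ := ψ z₀ / φ z₀ with hc_def
      -- neighborhood where h = c and φ ≠ 0
      have hWnhds : {z | ψ z / φ z = c} ∩ U ∈ nhds z₀ :=
        Filter.inter_mem hconst (hUopen.mem_nhds hz₀)
      obtain ⟨O, hOsub, hOopen, hz₀O⟩ := mem_nhds_iff.1 hWnhds
      obtain ⟨z₁, hz₁O, hz₁E⟩ := hpos O hOopen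
        (fun w hw => (hOsub hw).2.1) ⟨z₀, hz₀O⟩
      have hz₁W := hOsub hz₁O
      set r : ℝ := ‖ψ z₁‖ / ‖φ z₁‖ with hr_def
      have hr : 0 ≤ r := div_nonneg (norm_nonneg _) (norm_nonneg _)
      have hcr : c = (r:ℂ) := by
        rw [← hz₁W.1, ratio _ _ hz₁W.2.2 hz₁E]
      -- ψ = c φ eventually at z₀
      have hev : ψ =ᶠ[nhds z₀] fun z => c * φ z := by
        filter_upwards [hWnhds] with z hz
        have hφz : φ z ≠ 0 := hz.2.2
        have h5 : ψ z / φ z = c := hz.1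
        rw [div_eq_iff hφz] at h5
        exact h5
      have hEqOn : Set.EqOn ψ (fun z => c * φ z) 𝔻 :=
        hψan.eqOn_of_preconnected_of_eventuallyEq
          (fun z hz => analyticAt_const.mul (hφan z hz))
          ((convex_ball (0:ℂ) 1).isPreconnected) hz₀.1 hev
      -- compute nrm ψ = r
      have hnr : nrm ψ = r := by
        unfold nrm
        have : (fun z => ‖ψ z‖) =ᵐ[vD] fun z => r * ‖φ z‖ := by
          filter_upwards [ae_restrict_mem hDmeas] with z hz
          rw [hEqOn hz, hcr, norm_mul, Complex.norm_real, Real.norm_of_nonneg hr]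
        rw [integral_congr_ae this, integral_const_mul]
        have : ∫ z, ‖φ z‖ ∂vD = nrm φ := rfl
        rw [this, hnφ, mul_one]
      have hr1 : r = 1 := by rw [← hnr, hnψ]
      rw [hr1] at hcr
      filter_upwards [ae_restrict_mem hDmeas] with z hz
      rw [hEqOn hz, hcr]
      simp
    · -- open mapping case: contradiction
      exfalso
      have hs : {w : ℂ | w.im = 0} ∈ Filter.map (fun z => ψ z / φ z) (nhds z₀) := by
        rw [Filter.mem_map]
        exact Filter.mem_of_superset (hUopen.mem_nhds hz₀) (fun z hz => hIm z hz)
      have hs2 : {w : ℂ | w.im = 0} ∈ nhds (ψ z₀ / φ z₀) := hopen hs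
      obtain ⟨ε, hε, hball⟩ := Metric.mem_nhds_iff.1 hs2
      have him0 : (ψ z₀ / φ z₀).im = 0 := hIm z₀ hz₀
      have hmem : ψ z₀ / φ z₀ + ((ε/2 : ℝ) : ℂ) * Complex.I ∈ Metric.ball (ψ z₀ / φ z₀) ε := by
        rw [Metric.mem_ball, dist_eq_norm]
        simp only [add_sub_cancel_left]
        rw [norm_mul, Complex.norm_I, mul_one, Complex.norm_real, Real.norm_eq_abs]
        rw [abs_of_pos (by linarith)]
        linarith
      have := hball hmem
      simp only [Set.mem_setOf_eq, Complex.add_im, Complex.mul_I_im, Complex.ofReal_re,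
        him0] at this
      linarith
  · -- backward direction
    intro h
    unfold ang
    have heq : (fun z => tmu φ z * ψ z) =ᵐ[vD] fun z => ((‖φ z‖ : ℝ) : ℂ) := by
      filter_upwards [h] with z hz
      rw [hz]
      by_cases h0 : φ z = 0
      · simp [tmu, h0]
      · have ha : ((‖φ z‖ : ℝ) : ℂ) ≠ 0 := by
          simp only [ne_eq, Complex.ofReal_eq_zero, norm_eq_zero]; exact h0
        rw [tmu, div_mul_eq_mul_div, mul_comm ((starRingEnd ℂ) (φ z)) (φ z),
          Complex.mul_conj, Complex.normSq_eq_norm_sq, div_eq_iff ha]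
        push_cast; ring
    rw [integral_congr_ae heq]
    have hint : Integrable (fun z => ((‖φ z‖ : ℝ) : ℂ)) vD := hφabs.ofReal
    have h2 : (∫ z, ((‖φ z‖ : ℝ) : ℂ) ∂vD).re = ∫ z, ‖φ z‖ ∂vD := by
      have := integral_re (μ := vD) hint
      simpa using this.symm
    rw [h2]
    exact hnφ
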